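/- A finite metric space M admits a fully labeled tree representation if and only if M satisfies both the four-point condition (for all q,r,s,t: d(q,r)+d(s,t) ≤ max{d(q,s)+d(r,t), d(r,s)+d(q,t)}) and the fourth-point condition (for all x,y,z there exists p* with d(x,p*)+d(y,p*)+d(z,p*) = (1/2)(d(x,y)+d(y,z)+d(z,x))). -/

import Mathlib

/-- The total weight of a walk in a graph, with respect to an edge-weight
function `w` on pairs of vertices. -/
def SimpleGraph.Walk.weight {V : Type*} {G : SimpleGraph V} (w : V → V → ℝ)
    {u v : V} (p : G.Walk u v) : ℝ :=
  (p.darts.map fun d => w d.toProd.1 d.toProd.2).sum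

/-- The four-point condition for a metric space. -/
def FourPointCond (X : Type*) [MetricSpace X] : Prop :=
  ∀ q r s t : X,
    dist q r + dist s t ≤ max (dist q s + dist r t) (dist r s + dist q t)

/-- The fourth-point condition for a metric space. -/
def FourthPointCond (X : Type*) [MetricSpace X] : Prop :=
  ∀ x y z : X, ∃ p : X,
    dist x p + dist y p + dist z p = (dist x y + dist y z + dist z x) / 2

/-- A finite metric space `X` has a *fully labeled tree representation* if there is a
tree `G` with strictly positive (symmetric) edge weights `w` together with a bijection
`φ` from `X` to the vertices of `G` such that the weighted path distance in `G`
between `φ x` and `φ y` (the weight of the unique path, i.e. of any path) equals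
`dist x y` for all `x y : X`. -/
def HasFullyLabeledTreeRep (X : Type) [MetricSpace X] : Prop :=
  ∃ (V : Type) (G : SimpleGraph V) (w : V → V → ℝ) (φ : X ≃ V),
    G.IsTree ∧ (∀ u v : V, G.Adj u v → 0 < w u v) ∧ (∀ u v : V, w u v = w v u) ∧
    ∀ x y : X, ∀ p : G.Walk (φ x) (φ y), p.IsPath → p.weight w = dist x y


namespace SimpleGraph.Walk
variable {V : Type*} {G : SimpleGraph V} (w : V → V → ℝ)

@[simp] lemma weight_nil' {u : V} : (nil : G.Walk u u).weight w = 0 := rfl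

@[simp] lemma weight_cons' {u v x : V} (h : G.Adj u v) (p : G.Walk v x) :
    (cons h p).weight w = w u v + p.weight w := by
  simp [weight]

lemma weight_append' {u v x : V} (p : G.Walk u v) (q : G.Walk v x) :
    (p.append q).weight w = p.weight w + q.weight w := by
  simp [weight, darts_append]

lemma weight_concat' {u v x : V} (p : G.Walk u v) (h : G.Adj v x) :
    (p.concat h).weight w = p.weight w + w v x := by
  simp [concat_eq_append, weight_append']

lemma weight_copy' {u v u' v' : V} (p : G.Walk u v) (hu : u = u') (hv : v = v') :
    (p.copy hu hv).weight w = p.weight w := by subst hu; subst hv; rfl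

lemma weight_reverse' (hw : ∀ a b : V, w a b = w b a) {u v : V} (p : G.Walk u v) :
    p.reverse.weight w = p.weight w := by
  simp only [weight, darts_reverse, List.map_reverse, List.sum_reverse, List.map_map]
  rw [List.map_congr_left (fun d _ => hw d.toProd.2 d.toProd.1)]

lemma isPath_concat' {u v x : V} {p : G.Walk u v} (hp : p.IsPath) (h : G.Adj v x)
    (hx : x ∉ p.support) : (p.concat h).IsPath := by
  rw [concat_eq_append]
  rw [isPath_def, support_append]
  simp only [support_cons, support_nil, List.tail_cons]
  rw [List.nodup_append]
  refine ⟨hp.support_nodup, List.nodup_singleton x, ?_⟩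
  intro a ha b hb
  simp only [List.mem_singleton] at hb
  subst hb; rintro rfl; exact hx ha

lemma singleEdge_isPath {u v : V} (h : G.Adj u v) : (cons h nil).IsPath := by
  simp [h.ne]

end SimpleGraph.Walk

lemma medBetween {X : Type*} [MetricSpace X] (hm : FourthPointCond X) (x y z : X) :
    ∃ m : X, dist x m + dist m y = dist x y ∧ dist y m + dist m z = dist y z ∧
      dist x m + dist m z = dist x z := by
  obtain ⟨p, hp⟩ := hm x y z
  have t1 := dist_triangle x p y
  have t2 := dist_triangle y p z
  have t3 := dist_triangle x p z
  have c1 : dist p y = dist y p := dist_comm p y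
  have c2 : dist p z = dist z p := dist_comm p z
  have c3 : dist z x = dist x z := dist_comm z x
  exact ⟨p, by linarith, by linarith, by linarith⟩

open SimpleGraph Walk in
def treeGraph (X : Type) [MetricSpace X] : SimpleGraph X where
  Adj x y := x ≠ y ∧ ∀ z, dist x z + dist z y = dist x y → z = x ∨ z = y
  symm := by
    constructor
    rintro x y ⟨hne, hz⟩
    refine ⟨hne.symm, fun z hz' => ?_⟩
    have : dist x z + dist z y = dist x y := by
      have c1 := dist_comm y z; have c2 := dist_comm z x; have c3 := dist_comm y x
      linarith
    exact (hz z this).symm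
  loopless := ⟨fun x h => h.1 rfl⟩

lemma treeGraph_adj_iff {X : Type} [MetricSpace X] {x y : X} : (treeGraph X).Adj x y ↔
    x ≠ y ∧ ∀ z, dist x z + dist z y = dist x y → z = x ∨ z = y := Iff.rfl

open SimpleGraph Walk in
lemma treeGraph_geo {X : Type} [MetricSpace X] (h4 : FourPointCond X)
    (hm : FourthPointCond X) :
    ∀ (n : ℕ) {x y : X} (p : (treeGraph X).Walk x y), p.IsPath → p.length ≤ n →
      p.weight dist = dist x y := by
  intro n
  induction n with
  | zero =>
    intro x y p hp hl
    cases p with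
    | nil => simp [dist_self]
    | cons h q => simp at hl
  | succ n ih =>
    intro x y p hp hl
    cases p with
    | nil => simp [dist_self]
    | cons h q =>
      rename_i v
      have hq0 : q.IsPath := hp.of_cons
      have hxq : x ∉ q.support := ((Walk.cons_isPath_iff h q).1 hp).2
      cases q with
      | nil =>
        simp only [weight_cons', weight_nil', add_zero]
      | cons h2 r =>
        rename_i v2
        cases r with
        | nil =>
          -- length-2 path x - v - y
          obtain ⟨m, hm1, hm2, hm3⟩ := medBetween hm x v y
          have e1 := (treeGraph_adj_iff.1 h).2 m hm1
          have e2 := (treeGraph_adj_iff.1 h2).2 m hm2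
          have hxy : x ≠ y := by
            intro hxy
            apply hxq
            subst hxy
            simp
          have hkey : dist x v + dist v y = dist x y := by
            rcases e1 with rfl | rfl
            · rcases e2 with h' | h'
              · exact absurd h' h.ne
              · exact absurd h' hxy
            · linarith
          simp only [weight_cons', weight_nil', add_zero]
          linarith
        | cons h3 r2 =>
          -- length ≥ 3
          obtain ⟨z, t, e2, hdec⟩ := Walk.exists_cons_eq_concat h2 (Walk.cons h3 r2)
          have hqc : ((t.concat e2)).IsPath := hdec ▸ hq0
          have ht : t.IsPath := by
            rw [Walk.concat_eq_append] at hqc; exact hqc.of_append_left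
          have hlen_t : t.length = r2.length + 1 := by
            have := congrArg Walk.length hdec
            simp [Walk.length_concat] at this
            omega
          have hql : (Walk.cons h2 (Walk.cons h3 r2)).length ≤ n := by
            simp at hl ⊢; omega
          have hvz : v ≠ z := by
            rintro rfl
            have : t = Walk.nil := Walk.isPath_iff_eq_nil.1 ht
            rw [this] at hlen_t
            simp at hlen_t
          have hql2 : r2.length + 2 ≤ n := by simp at hql; omega
          have ihq := ih (Walk.cons h2 (Walk.cons h3 r2)) hq0 hql
          have iht := ih t ht (by omega)
          have hxt : x ∉ t.support := by
            intro hx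
            apply hxq
            rw [hdec, Walk.support_concat]
            exact List.mem_append.2 (Or.inl hx)
          have ihxt := ih (Walk.cons h t) (ht.cons hxt) (by simp [hlen_t]; omega)
          have A2 : dist x v + dist v z = dist x z := by
            simpa [weight_cons', iht] using ihxt
          have A1 : dist v y = dist v z + dist z y := by
            have := congrArg (Walk.weight dist) hdec
            rw [ihq] at this
            rw [weight_concat', iht] at this
            linarith
          have bpos : 0 < dist v z := dist_pos.2 hvz
          have htriang := dist_triangle x v y
          have h4' := h4 x z v y
          have czv : dist z v = dist v z := dist_comm z v
          simp only [weight_cons', ihq]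
          rcases max_cases (dist x v + dist z y) (dist z v + dist x y) with ⟨hmax, _⟩ | ⟨hmax, _⟩ <;>
            rw [hmax] at h4' <;> linarith

open SimpleGraph Walk in
lemma treeGraph_reach {X : Type} [MetricSpace X] [Fintype X] :
    ∀ (n : ℕ) (x y : X), {z | dist x z + dist z y = dist x y}.ncard ≤ n →
      (treeGraph X).Reachable x y := by
  intro n
  induction n with
  | zero =>
    intro x y hn
    exfalso
    have hx : x ∈ {z | dist x z + dist z y = dist x y} := by simp
    have : 0 < {z | dist x z + dist z y = dist x y}.ncard :=
      (Set.ncard_pos (Set.toFinite _)).2 ⟨x, hx⟩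
    omega
  | succ n ih =>
    intro x y hn
    by_cases hxy : x = y
    · subst hxy; exact Reachable.refl x
    by_cases hadj : (treeGraph X).Adj x y
    · exact hadj.reachable
    have hex : ∃ z, dist x z + dist z y = dist x y ∧ ¬(z = x ∨ z = y) := by
      by_contra hcon
      push_neg at hcon
      exact hadj (treeGraph_adj_iff.2 ⟨hxy, fun z hz => hcon z hz⟩)
    obtain ⟨z, hzeq, hzne⟩ := hex
    push_neg at hzne
    obtain ⟨hznx, hzny⟩ := hzne
    have hsub1 : {z' | dist x z' + dist z' z = dist x z} ⊂
        {z' | dist x z' + dist z' y = dist x y} := by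
      constructor
      · intro a ha
        simp only [Set.mem_setOf_eq] at ha ⊢
        have t1 := dist_triangle a z y
        have t2 := dist_triangle x a y
        linarith
      · intro hcon
        have hy1 : y ∈ {z' | dist x z' + dist z' y = dist x y} := by simp
        have hy2 := hcon hy1
        simp only [Set.mem_setOf_eq] at hy2
        have : dist y z = 0 := by
          have c1 := dist_comm z y
          linarith
        exact hzny (dist_eq_zero.1 this).symm
    have hsub2 : {z' | dist z z' + dist z' y = dist z y} ⊂
        {z' | dist x z' + dist z' y = dist x y} := by
      constructor
      · intro a ha
        simp only [Set.mem_setOf_eq] at ha ⊢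
        have t1 := dist_triangle x z a
        have t2 := dist_triangle x a y
        linarith
      · intro hcon
        have hx1 : x ∈ {z' | dist x z' + dist z' y = dist x y} := by simp
        have hx2 := hcon hx1
        simp only [Set.mem_setOf_eq] at hx2
        have c1 := dist_comm x z
        have : dist z x = 0 := by linarith
        exact hznx (dist_eq_zero.1 this)
    have hc1 : {z' | dist x z' + dist z' z = dist x z}.ncard ≤ n := by
      have := Set.ncard_lt_ncard hsub1 (Set.toFinite _)
      omega
    have hc2 : {z' | dist z z' + dist z' y = dist z y}.ncard ≤ n := by
      have := Set.ncard_lt_ncard hsub2 (Set.toFinite _)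
      omega
    exact (ih x z hc1).trans (ih z y hc2)

open SimpleGraph Walk in
lemma treeGraph_acyclic {X : Type} [MetricSpace X] (h4 : FourPointCond X)
    (hm : FourthPointCond X) : (treeGraph X).IsAcyclic := by
  intro v c hc
  cases c with
  | nil => exact hc.ne_nil rfl
  | cons h q =>
    rename_i u
    have hq : q.IsPath := ((Walk.cons_isCycle_iff q h).1 hc).1
    have h3 : 3 ≤ (Walk.cons h q).length := hc.three_le_length
    have hql : 2 ≤ q.length := by simp at h3; omega
    cases q with
    | nil => simp at hql
    | cons h2 r =>
      obtain ⟨z, t, e2, hdec⟩ := Walk.exists_cons_eq_concat h2 r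
      have hqc : (t.concat e2).IsPath := hdec ▸ hq
      have ht : t.IsPath := by
        rw [Walk.concat_eq_append] at hqc; exact hqc.of_append_left
      have hlen_t : t.length = r.length := by
        have := congrArg Walk.length hdec
        simp [Walk.length_concat] at this
        omega
      have hrl : 1 ≤ r.length := by simp at hql; omega
      have huz : u ≠ z := by
        rintro rfl
        have : t = Walk.nil := Walk.isPath_iff_eq_nil.1 ht
        rw [this] at hlen_t
        simp at hlen_t; omega
      have geo := treeGraph_geo h4 hm
      have d1 : dist u v = dist u z + dist z v := by
        have e1 := geo (Walk.cons h2 r).length (Walk.cons h2 r) hq le_rfl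
        have e0 := congrArg (Walk.weight dist) hdec
        rw [e1, weight_concat', geo t.length t ht le_rfl] at e0
        linarith
      have hW : (Walk.cons e2 (Walk.cons h Walk.nil)).IsPath := by
        simp [e2.ne, huz.symm, h.ne]
      have d2 := geo 2 (Walk.cons e2 (Walk.cons h Walk.nil)) hW (by simp)
      simp only [weight_cons', weight_nil', add_zero] at d2
      have hzv : 0 < dist z v := dist_pos.2 e2.ne
      have c1 := dist_comm u z
      have c2 := dist_comm v u
      linarith

section Forward
set_option linter.unusedSectionVars false
open SimpleGraph Walk

variable {V : Type} [DecidableEq V] {G : SimpleGraph V} {w : V → V → ℝ} {d : V → V → ℝ}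

/-- Bundle of hypotheses for the forward direction. -/
structure TreeMetAux (G : SimpleGraph V) (w : V → V → ℝ) (d : V → V → ℝ) : Prop where
  tree : G.IsTree
  wpos : ∀ u v : V, G.Adj u v → 0 < w u v
  wsymm : ∀ u v : V, w u v = w v u
  geo : ∀ (u v : V) (p : G.Walk u v), p.IsPath → p.weight w = d u v
  symm : ∀ a b : V, d a b = d b a
  tri : ∀ a b c : V, d a c ≤ d a b + d b c
  eq_of : ∀ a b : V, d a b = 0 → a = b

namespace TreeMetAux

lemma dself (H : TreeMetAux G w d) (a : V) : d a a = 0 := by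
  have := H.geo a a Walk.nil IsPath.nil
  simpa using this.symm

lemma edge (H : TreeMetAux G w d) {u v : V} (h : G.Adj u v) : d u v = w u v := by
  have := H.geo u v (Walk.cons h Walk.nil) (singleEdge_isPath h)
  simpa using this.symm

lemma dpos (H : TreeMetAux G w d) {u v : V} (h : G.Adj u v) : 0 < d u v := by
  rw [H.edge h]; exact H.wpos u v h

lemma pathExists (H : TreeMetAux G w d) (u v : V) : ∃ p : G.Walk u v, p.IsPath := by
  obtain ⟨p⟩ := H.tree.isConnected.preconnected u v
  exact ⟨p.toPath, p.toPath.isPath⟩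

lemma split (H : TreeMetAux G w d) {a b : V} (p : G.Walk a b) (hp : p.IsPath) {c : V}
    (hc : c ∈ p.support) : d a c + d c b = d a b := by
  have h1 := H.geo _ _ (p.takeUntil c hc) (hp.takeUntil hc)
  have h2 := H.geo _ _ (p.dropUntil c hc) (hp.dropUntil hc)
  have h3 := H.geo _ _ p hp
  have h4 : ((p.takeUntil c hc).append (p.dropUntil c hc)).weight w = p.weight w :=
    congrArg (Walk.weight w) (p.take_spec hc)
  rw [weight_append'] at h4
  linarith

lemma side (H : TreeMetAux G w d) {v u : V} (e : G.Adj v u) (a : V) :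
    d a u = d a v + d v u ∨ d a v = d a u + d v u := by
  obtain ⟨P, hP⟩ := H.pathExists a v
  by_cases hu : u ∈ P.support
  · right
    have := H.split P hP hu
    have c1 := H.symm u v
    linarith
  · left
    have hP' : (P.concat e).IsPath := isPath_concat' hP e hu
    have h1 := H.geo _ _ (P.concat e) hP'
    rw [weight_concat'] at h1
    have h2 := H.geo _ _ P hP
    have h3 := H.edge e
    linarith

lemma cut (H : TreeMetAux G w d) {v u : V} (e : G.Adj v u) (a b : V)
    (ha : d a u = d a v + d v u) (hb : d b v = d b u + d v u) :
    d a b = d a v + d v u + d u b := by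
  have hvu : 0 < d v u := H.dpos e
  obtain ⟨A, hA⟩ := H.pathExists a v
  have hAu : u ∉ A.support := by
    intro hu
    have := H.split A hA hu
    have c1 := H.symm u v
    linarith
  obtain ⟨B, hB⟩ := H.pathExists b u
  have hBv : v ∉ B.support := by
    intro hv
    have := H.split B hB hv
    have c1 := H.symm v u
    linarith
  have hW : (A.concat e).IsPath := isPath_concat' hA e hAu
  have hfull : ((A.concat e).append B.reverse).IsPath := by
    rw [Walk.isPath_def, Walk.support_append, List.nodup_append]
    refine ⟨hW.support_nodup, hB.reverse.support_nodup.tail, ?_⟩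
    intro c hcW c' hcT hcc
    subst hcc
    have hcBr : c ∈ B.reverse.support := List.tail_subset _ hcT
    have hcB : c ∈ B.support := by rwa [Walk.support_reverse, List.mem_reverse] at hcBr
    have hcu : c ≠ u := by
      have hcons := B.reverse.support_eq_cons
      have hnd := hB.reverse.support_nodup
      rw [hcons] at hnd
      rintro rfl
      exact (List.nodup_cons.1 hnd).1 hcT
    have hcA : c ∈ A.support := by
      rw [Walk.support_concat, List.mem_append] at hcW
      rcases hcW with h | h
      · exact h
      · simp at h; exact absurd h hcu
    have hp1 : ((A.dropUntil c hcA).concat e).IsPath := by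
      refine isPath_concat' (hA.dropUntil hcA) e ?_
      intro hmem
      exact hAu (Walk.support_dropUntil_subset A hcA hmem)
    have hp2 : (B.dropUntil c hcB).IsPath := hB.dropUntil hcB
    have huniq := H.tree.existsUnique_path c u
    have heq : (A.dropUntil c hcA).concat e = B.dropUntil c hcB :=
      huniq.unique hp1 hp2
    have hv1 : v ∈ ((A.dropUntil c hcA).concat e).support := by
      rw [Walk.support_concat, List.mem_append]
      exact Or.inl (Walk.end_mem_support _)
    rw [heq] at hv1
    exact hBv (Walk.support_dropUntil_subset B hcB hv1)
  have hgeq := H.geo _ _ _ hfull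
  rw [weight_append', weight_concat', weight_reverse' w H.wsymm] at hgeq
  have e1 := H.geo _ _ A hA
  have e2 := H.geo _ _ B hB
  have e3 := H.edge e
  have c1 := H.symm b u
  linarith

lemma fourPt (H : TreeMetAux G w d) : ∀ {q r : V} (p : G.Walk q r), p.IsPath →
    ∀ s t : V, d q r + d s t ≤ max (d q s + d r t) (d r s + d q t) := by
  intro q r p
  induction p with
  | nil =>
    rename_i q'
    intro _ s t
    have t1 := H.tri s q' t
    have c1 := H.symm s q'
    have h0 := H.dself q'
    rw [max_self]
    linarith
  | cons e p' ih =>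
    rename_i q' u r'
    intro hp s t
    have hp' := hp.of_cons
    have ih' := ih hp'
    have hw0 : d q' r' = d q' u + d u r' := by
      have h1 := H.geo _ _ (Walk.cons e p') hp
      rw [weight_cons'] at h1
      have h2 := H.geo _ _ p' hp'
      have he := H.edge e
      linarith
    rcases H.side e s with hsq | hsu
    · -- s on q'-side : d s u = d s q' + d q' u
      have hcut : d s r' = d s q' + d q' u + d u r' := by
        refine H.cut e s r' hsq ?_
        have c1 := H.symm r' q'
        have c2 := H.symm q' r'
        have c3 := H.symm r' u
        have c4 := H.symm u r'
        linarith
      refine le_trans ?_ (le_max_right _ _)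
      have t1 := H.tri s q' t
      have c1 := H.symm r' s
      have c2 := H.symm s q'
      have c3 := H.symm s r'
      linarith
    · rcases H.side e t with htq | htu
      · -- t on q'-side
        have hcut : d t r' = d t q' + d q' u + d u r' := by
          refine H.cut e t r' htq ?_
          have c1 := H.symm r' q'
          have c2 := H.symm r' u
          linarith
        refine le_trans ?_ (le_max_left _ _)
        have t1 := H.tri s q' t
        have c1 := H.symm r' t
        have c2 := H.symm t q'
        have c3 := H.symm t r'
        have c4 := H.symm s t
        have c5 := H.symm q' t
        have c6 := H.symm q' s
        linarith
      · -- both on u-side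
        rcases le_max_iff.1 (ih' s t) with hih | hih
        · refine le_trans ?_ (le_max_left _ _)
          have c1 := H.symm u s
          have c2 := H.symm q' s
          have c3 := H.symm s u
          have c4 := H.symm s q'
          linarith
        · refine le_trans ?_ (le_max_right _ _)
          have c1 := H.symm u t
          have c2 := H.symm q' t
          have c3 := H.symm t u
          have c4 := H.symm t q'
          linarith

lemma med (H : TreeMetAux G w d) : ∀ {y z : V} (p : G.Walk y z), p.IsPath →
    ∀ x : V, ∃ m : V, d y m + d m z = d y z ∧ d x m + d m y = d x y ∧
      d x m + d m z = d x z := by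
  intro y z p
  induction p with
  | nil =>
    rename_i y'
    intro _ x
    refine ⟨y', ?_, ?_, ?_⟩ <;> simp [H.dself]
  | cons e p' ih =>
    rename_i y' u z'
    intro hp x
    have hp' := hp.of_cons
    have hq : d y' z' = d y' u + d u z' := by
      have h1 := H.geo _ _ (Walk.cons e p') hp
      rw [weight_cons'] at h1
      have h2 := H.geo _ _ p' hp'
      have he := H.edge e
      linarith
    obtain ⟨m, hm1, hm2, hm3⟩ := ih hp' x
    rcases H.side e x with hxq | hxu
    · -- x on y'-side : d x u = d x y' + d y' u  → median is y'
      refine ⟨y', ?_, ?_, ?_⟩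
      · have := H.dself y'; linarith
      · have := H.dself y'; linarith
      · have hcut : d x z' = d x y' + d y' u + d u z' := by
          refine H.cut e x z' hxq ?_
          have c1 := H.symm z' y'
          have c2 := H.symm z' u
          linarith
        linarith
    · -- x on u-side : d x y' = d x u + d y' u → median is m
      refine ⟨m, ?_, ?_, hm3⟩
      · have t1 := H.tri y' u m
        have t2 := H.tri y' m z'
        linarith
      · have t1 := H.tri m u y'
        have t2 := H.tri x m y'
        have c1 := H.symm m u
        have c2 := H.symm u y'
        have c3 := H.symm y' u
        linarith
  
end TreeMetAux
end Forward

open SimpleGraph Walk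

theorem fully_labeled_tree_rep_iff_four_point_and_fourth_point
    {X : Type} [MetricSpace X] [Fintype X] [Nonempty X] :
    HasFullyLabeledTreeRep X ↔ FourPointCond X ∧ FourthPointCond X := by
  constructor
  · rintro ⟨V, G, w, φ, hT, hpos, hwsymm, hgeo⟩
    classical
    have hgeo' : ∀ (u v : V) (p : G.Walk u v), p.IsPath →
        p.weight w = dist (φ.symm u) (φ.symm v) := by
      intro u v p hp
      have := hgeo (φ.symm u) (φ.symm v)
        (p.copy (φ.apply_symm_apply u).symm (φ.apply_symm_apply v).symm)
        (by rwa [Walk.isPath_copy])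
      rwa [weight_copy'] at this
    have H : TreeMetAux G w (fun a b => dist (φ.symm a) (φ.symm b)) :=
      { tree := hT, wpos := hpos, wsymm := hwsymm, geo := hgeo',
        symm := fun a b => dist_comm _ _,
        tri := fun a b c => dist_triangle _ _ _,
        eq_of := fun a b h => φ.symm.injective.eq_iff.1 (dist_eq_zero.1 h) }
    constructor
    · intro q r s t
      obtain ⟨p, hp⟩ := H.pathExists (φ q) (φ r)
      have := H.fourPt p hp (φ s) (φ t)
      simpa using this
    · intro x y z
      obtain ⟨p, hp⟩ := H.pathExists (φ y) (φ z)
      obtain ⟨m, h1, h2, h3⟩ := H.med p hp (φ x)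
      simp only [Equiv.symm_apply_apply] at h1 h2 h3
      refine ⟨φ.symm m, ?_⟩
      have c1 := dist_comm (φ.symm m) y
      have c2 := dist_comm (φ.symm m) z
      have c3 := dist_comm z x
      linarith
  · rintro ⟨h4, hm⟩
    have hconn : (treeGraph X).Connected :=
      SimpleGraph.Connected.mk (fun x y => treeGraph_reach _ x y le_rfl)
    refine ⟨X, treeGraph X, dist, Equiv.refl X,
      ⟨hconn, treeGraph_acyclic h4 hm⟩,
      fun u v h => dist_pos.2 h.ne, fun u v => dist_comm u v, ?_⟩
    intro x y p hp
    exact treeGraph_geo h4 hm p.length p hp le_rfl
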